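/- Let E > 0 and a ∈ ℝ, and let (P,L) ∈ ℝ³ × ℝ³ satisfy |P|² = 2E and P·L = 0. Define x = P and y = (P × L)/|P|². Then: (i) x·y = 0; (ii) x × y = -L; (iii) |L|² = |x|² |y|² = 2E |y|²; and (iv) G(P,L) = |L|² - a²(P₁² + P₂²) = 2E(y₁² + y₂² + y₃²) - a²(x₁² + x₂²). Hence under the map (P,L) ↦ (x,y) the Hamiltonian G of the spheroidal harmonics integrable system becomes (up to the symplectic scaling to the unit sphere) the Hamiltonian of the C. Neumann system of a particle on the sphere with rotationally symmetric harmonic potential. -/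
import Mathlib


noncomputable section

/-- The cross product in `ℝ³`. -/
def cross3 (v w : Fin 3 → ℝ) : Fin 3 → ℝ :=
  ![v 1 * w 2 - v 2 * w 1, v 2 * w 0 - v 0 * w 2, v 0 * w 1 - v 1 * w 0]

/-- The dot product in `ℝ³`. -/
def dot3 (v w : Fin 3 → ℝ) : ℝ := v 0 * w 0 + v 1 * w 1 + v 2 * w 2

/-- On the reduced phase space `|P|² = 2E`, `P·L = 0`, the map
`(P,L) ↦ (x,y) = (P, (P × L)/|P|²)` satisfies: (i) `x·y = 0`; (ii) `x × y = -L`;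
(iii) `|L|² = |x|²|y|² = 2E|y|²`; (iv) `G(P,L) = |L|² - a²(P₁²+P₂²)
= 2E(y₁²+y₂²+y₃²) - a²(x₁²+x₂²)`, the Hamiltonian of the C. Neumann system. -/
theorem to_neumann (E a : ℝ) (hE : 0 < E) (P L : Fin 3 → ℝ)
    (hP : dot3 P P = 2 * E) (hPL : dot3 P L = 0) :
    let x : Fin 3 → ℝ := P
    let y : Fin 3 → ℝ := (1 / dot3 P P) • cross3 P L
    dot3 x y = 0 ∧
    cross3 x y = -L ∧
    dot3 L L = dot3 x x * dot3 y y ∧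
    dot3 L L = 2 * E * dot3 y y ∧
    dot3 L L - a ^ 2 * ((P 0) ^ 2 + (P 1) ^ 2)
      = 2 * E * ((y 0) ^ 2 + (y 1) ^ 2 + (y 2) ^ 2) - a ^ 2 * ((x 0) ^ 2 + (x 1) ^ 2) := by
  intro x y
  have he : dot3 P P ≠ 0 := by rw [hP]; positivity
  set t : ℝ := (dot3 P P)⁻¹ with htdef
  have ht : t * (P 0 * P 0 + P 1 * P 1 + P 2 * P 2) = 1 := by
    rw [htdef]; exact inv_mul_cancel₀ he
  have h0 : P 0 * L 0 + P 1 * L 1 + P 2 * L 2 = 0 := hPL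
  have hPe : P 0 * P 0 + P 1 * P 1 + P 2 * P 2 = 2 * E := hP
  have hy : ∀ i, y i = t * cross3 P L i := by
    intro i; simp [y, htdef]
  have hy0 : y 0 = t * (P 1 * L 2 - P 2 * L 1) := by rw [hy]; rfl
  have hy1 : y 1 = t * (P 2 * L 0 - P 0 * L 2) := by rw [hy]; rfl
  have hy2 : y 2 = t * (P 0 * L 1 - P 1 * L 0) := by rw [hy]; rfl
  have hyL : dot3 L L = dot3 P P * dot3 y y := by
    simp only [dot3, hy0, hy1, hy2]
    linear_combination (-(L 0 * L 0 + L 1 * L 1 + L 2 * L 2) *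
        (t * (P 0 * P 0 + P 1 * P 1 + P 2 * P 2) + 1)) * ht +
      (t * t * (P 0 * P 0 + P 1 * P 1 + P 2 * P 2) *
        (P 0 * L 0 + P 1 * L 1 + P 2 * L 2)) * h0
  refine ⟨?_, ?_, hyL, by rw [hyL, hP], ?_⟩
  · simp only [dot3, hy0, hy1, hy2]; ring
  · funext i
    fin_cases i
    · show P 1 * y 2 - P 2 * y 1 = -L 0
      rw [hy1, hy2]; linear_combination (t * P 0) * h0 - L 0 * ht
    · show P 2 * y 0 - P 0 * y 2 = -L 1
      rw [hy0, hy2]; linear_combination (t * P 1) * h0 - L 1 * ht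
    · show P 0 * y 1 - P 1 * y 0 = -L 2
      rw [hy0, hy1]; linear_combination (t * P 2) * h0 - L 2 * ht
  · have h5 : 2 * E * ((y 0) ^ 2 + (y 1) ^ 2 + (y 2) ^ 2) = dot3 L L := by
      rw [hyL, hP]; simp only [dot3]; ring
    rw [h5]
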